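/- Let $0<a<1$ be rational with $a=N_0/K_0$ in lowest terms and $K_0$ even, and $b=1-a$. Then $(\mathbb{Z}+1/2)/a \cap (\mathbb{Z}+1/2)/b = K_0(\mathbb{Z}+1/2)$, i.e., the common points of the two half-integer lattices are exactly the odd multiples of $K_0/2$. -/

import Mathlib

theorem lattice_intersection_even_case (N₀ K₀ : ℕ) (hcop : Nat.Coprime N₀ K₀)
    (hN₀ : 0 < N₀) (hlt : N₀ < K₀) (heven : Even K₀)
    (a b : ℝ) (hadef : a = (N₀ : ℝ) / (K₀ : ℝ)) (hbdef : b = 1 - a) :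
    {x : ℝ | ∃ n : ℤ, x = ((n : ℝ) + 1/2) / a} ∩
        {x : ℝ | ∃ n : ℤ, x = ((n : ℝ) + 1/2) / b} =
      {x : ℝ | ∃ n : ℤ, x = (K₀ : ℝ) * ((n : ℝ) + 1/2)} := by
  have hK0 : (0:ℝ) < K₀ := by exact_mod_cast hN₀.trans hlt
  have hKne : (K₀:ℝ) ≠ 0 := ne_of_gt hK0
  have hNposR : (0:ℝ) < N₀ := by exact_mod_cast hN₀
  have hNne : (N₀:ℝ) ≠ 0 := ne_of_gt hNposR
  have hNodd : Odd (N₀:ℤ) := by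
    rcases Nat.even_or_odd N₀ with h | h
    · exfalso
      have h2 : 2 ∣ Nat.gcd N₀ K₀ := Nat.dvd_gcd h.two_dvd heven.two_dvd
      rw [hcop] at h2; norm_num at h2
    · exact_mod_cast h
  set M : ℤ := (K₀:ℤ) - N₀ with hM
  have hMpos : 0 < M := by
    have : (N₀:ℤ) < K₀ := by exact_mod_cast hlt
    omega
  have hMR : (M:ℝ) = (K₀:ℝ) - N₀ := by push_cast [hM]; ring
  have hMposR : (0:ℝ) < M := by exact_mod_cast hMpos
  have hModd : Odd M := by
    have hKeven : Even (K₀:ℤ) := by exact_mod_cast heven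
    exact hKeven.sub_odd hNodd
  have hb : b = (M:ℝ) / K₀ := by rw [hbdef, hadef, hMR]; field_simp
  have hane : a ≠ 0 := by rw [hadef]; positivity
  have hbne : b ≠ 0 := by rw [hb]; positivity
  have hcopM : IsCoprime (N₀:ℤ) M := by
    have h1 : IsCoprime (N₀:ℤ) (K₀:ℤ) := by
      rw [Int.isCoprime_iff_gcd_eq_one]; exact_mod_cast hcop
    have h2 := h1.add_mul_left_right (-1)
    simpa [hM, sub_eq_add_neg, mul_comm] using h2
  ext x
  simp only [Set.mem_inter_iff, Set.mem_setOf_eq]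
  constructor
  · rintro ⟨⟨n, hn⟩, ⟨m, hm⟩⟩
    have heq : (2*(n:ℝ)+1) * M = (2*m+1) * N₀ := by
      rw [hadef] at hn; rw [hb] at hm
      have h3 : ((n:ℝ)+1/2) / ((N₀:ℝ)/K₀) = ((m:ℝ)+1/2) / ((M:ℝ)/K₀) := hn ▸ hm
      field_simp at h3
      have h5 : (K₀:ℝ) * ((2*(n:ℝ)+1) * M * 2) = (K₀:ℝ) * ((2*(m:ℝ)+1) * N₀ * 2) := by
        linear_combination (2*(K₀:ℝ)) * h3
      have h6 := mul_left_cancel₀ hKne h5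
      linarith
    have heqz : (2*n+1) * M = (2*m+1) * (N₀:ℤ) := by exact_mod_cast heq
    have hdvd2 : (N₀:ℤ) ∣ (2*n+1) * M := by
      refine ⟨2*m+1, ?_⟩
      linarith
    have hdvd : (N₀:ℤ) ∣ 2*n+1 := hcopM.dvd_of_dvd_mul_right hdvd2
    obtain ⟨t, ht⟩ := hdvd
    have htodd : Odd t := by
      have hodd : Odd ((N₀:ℤ)*t) := ht ▸ ⟨n, by ring⟩
      exact (Int.odd_mul.mp hodd).2
    obtain ⟨k, hk⟩ := htodd
    refine ⟨k, ?_⟩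
    have key : (2*(n:ℝ)+1) = (N₀:ℝ) * (2*(k:ℝ)+1) := by
      have h4 : (2*n+1 : ℤ) = (N₀:ℤ) * (2*k+1) := by rw [ht, hk]
      exact_mod_cast h4
    rw [hn, hadef]
    field_simp
    linear_combination key
  · rintro ⟨k, hk⟩
    obtain ⟨p, hp⟩ := hNodd
    obtain ⟨q, hq⟩ := hModd
    constructor
    · refine ⟨2*p*k + p + k, ?_⟩
      have key : (2*((2*p*k+p+k : ℤ):ℝ)+1) = (N₀:ℝ) * (2*(k:ℝ)+1) := by
        have h4 : (2*(2*p*k+p+k)+1 : ℤ) = (N₀:ℤ) * (2*k+1) := by rw [hp]; ring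
        exact_mod_cast h4
      rw [hk, hadef]
      field_simp
      push_cast at key ⊢
      linear_combination (-1:ℝ) * key
    · refine ⟨2*q*k + q + k, ?_⟩
      have key : (2*((2*q*k+q+k : ℤ):ℝ)+1) = (M:ℝ) * (2*(k:ℝ)+1) := by
        have h4 : (2*(2*q*k+q+k)+1 : ℤ) = M * (2*k+1) := by rw [hq]; ring
        exact_mod_cast h4
      rw [hk, hb]
      field_simp
      push_cast at key ⊢
      linear_combination (-1:ℝ) * key
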